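/- Fix n ≥ 3 and 1 ≤ d ≤ n−1. Let c_{(d)} be the affine permutation of size n given by c_{(d)}(j) = j − n + d − 1 if j ≡ 1 (mod n), c_{(d)}(j) = j − 1 if j ≡ 2,…,d (mod n), c_{(d)}(j) = j + 1 if j ≡ d+1,…,n−1 (mod n), and c_{(d)}(j) = j + d + 1 if j ≡ 0 (mod n). Then for every integer K ≥ 1 and every j ∈ ℤ: c_{(d)}^K(j) < j if j ≡ 1,…,d (mod n), and c_{(d)}^K(j) > j if j ≡ d+1,…,n (mod n). In particular c_{(d)}^K has no fixed points. -/
import Mathlib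

namespace AffineA

def cox (n d : ℕ) (j : ℤ) : ℤ :=
  if j % (n : ℤ) = 0 then j + d + 1
  else if j % (n : ℤ) = 1 then j - n + d - 1
  else if j % (n : ℤ) ≤ (d : ℤ) then j - 1
  else j + 1

lemma emod_shift (n j c : ℤ) : (j + c) % n = (j % n + c) % n :=
  (Int.emod_add_emod j n c).symm

lemma step_lt (n d : ℕ) (hn : 3 ≤ n) (hd1 : 1 ≤ d) (hd2 : d ≤ n - 1) (j : ℤ)
    (h : 1 ≤ j % (n : ℤ) ∧ j % (n : ℤ) ≤ (d : ℤ)) :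
    cox n d j < j ∧ 1 ≤ (cox n d j) % (n : ℤ) ∧ (cox n d j) % (n : ℤ) ≤ (d : ℤ) := by
  have hn' : (3 : ℤ) ≤ (n : ℤ) := by exact_mod_cast hn
  have hd2' : (d : ℤ) ≤ (n : ℤ) - 1 := by omega
  have hd1' : (1 : ℤ) ≤ (d : ℤ) := by exact_mod_cast hd1
  by_cases hr1 : j % (n : ℤ) = 1
  · have hc : cox n d j = j - n + d - 1 := by
      unfold cox
      rw [if_neg (by omega), if_pos hr1]
    rw [hc]
    refine ⟨by omega, ?_⟩
    have e1 : j - (n : ℤ) + d - 1 = j + ((d : ℤ) - 1 - n) := by ring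
    rw [e1, emod_shift, hr1]
    have e2 : (1 : ℤ) + ((d : ℤ) - 1 - n) = (d : ℤ) - n := by ring
    have e3 : (d : ℤ) - n = (d : ℤ) + (n : ℤ) * (-1) := by ring
    rw [e2, e3, Int.add_mul_emod_self_left, Int.emod_eq_of_lt (by omega) (by omega)]
    omega
  · have hc : cox n d j = j - 1 := by
      unfold cox
      rw [if_neg (by omega), if_neg hr1, if_pos h.2]
    rw [hc]
    refine ⟨by omega, ?_⟩
    have e1 : j - 1 = j + (-1 : ℤ) := by ring
    rw [e1, emod_shift, Int.emod_eq_of_lt (by omega) (by omega)]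
    omega

lemma step_gt (n d : ℕ) (hn : 3 ≤ n) (hd1 : 1 ≤ d) (hd2 : d ≤ n - 1) (j : ℤ)
    (h : j % (n : ℤ) = 0 ∨ (d : ℤ) < j % (n : ℤ)) :
    j < cox n d j ∧ ((cox n d j) % (n : ℤ) = 0 ∨ (d : ℤ) < (cox n d j) % (n : ℤ)) := by
  have hn' : (3 : ℤ) ≤ (n : ℤ) := by exact_mod_cast hn
  have hd2' : (d : ℤ) ≤ (n : ℤ) - 1 := by omega
  have hd1' : (1 : ℤ) ≤ (d : ℤ) := by exact_mod_cast hd1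
  have hlt : j % (n : ℤ) < n := Int.emod_lt_of_pos j (by omega)
  have hge : 0 ≤ j % (n : ℤ) := Int.emod_nonneg j (by omega)
  rcases h with h0 | hgt
  · have hc : cox n d j = j + d + 1 := by
      unfold cox; rw [if_pos h0]
    rw [hc]
    refine ⟨by omega, ?_⟩
    have e1 : j + (d : ℤ) + 1 = j + ((d : ℤ) + 1) := by ring
    rw [e1, emod_shift, h0]
    have e2 : (0 : ℤ) + ((d : ℤ) + 1) = (d : ℤ) + 1 := by ring
    rw [e2]
    rcases eq_or_lt_of_le (show (d : ℤ) + 1 ≤ n by omega) with he | hl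
    · left; rw [he, Int.emod_self]
    · right; rw [Int.emod_eq_of_lt (by omega) hl]; omega
  · have hc : cox n d j = j + 1 := by
      unfold cox
      rw [if_neg (by omega), if_neg (by omega), if_neg (by omega)]
    rw [hc]
    refine ⟨by omega, ?_⟩
    rw [emod_shift]
    rcases eq_or_lt_of_le (show j % (n : ℤ) + 1 ≤ n by omega) with he | hl
    · left; rw [he, Int.emod_self]
    · right; rw [Int.emod_eq_of_lt (by omega) hl]; omega

lemma iter_lt (n d : ℕ) (hn : 3 ≤ n) (hd1 : 1 ≤ d) (hd2 : d ≤ n - 1) :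
    ∀ K : ℕ, 1 ≤ K → ∀ j : ℤ, (1 ≤ j % (n : ℤ) ∧ j % (n : ℤ) ≤ (d : ℤ)) →
      (cox n d)^[K] j < j ∧ 1 ≤ ((cox n d)^[K] j) % (n : ℤ) ∧
        ((cox n d)^[K] j) % (n : ℤ) ≤ (d : ℤ) := by
  intro K
  induction K with
  | zero => omega
  | succ K ih =>
    intro _ j h
    rcases Nat.eq_zero_or_pos K with hK | hK
    · subst hK
      simpa using step_lt n d hn hd1 hd2 j h
    · obtain ⟨h1, h2⟩ := step_lt n d hn hd1 hd2 j h
      obtain ⟨g1, g2⟩ := ih hK (cox n d j) h2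
      rw [Function.iterate_succ_apply]
      exact ⟨by omega, g2⟩

lemma iter_gt (n d : ℕ) (hn : 3 ≤ n) (hd1 : 1 ≤ d) (hd2 : d ≤ n - 1) :
    ∀ K : ℕ, 1 ≤ K → ∀ j : ℤ, (j % (n : ℤ) = 0 ∨ (d : ℤ) < j % (n : ℤ)) →
      j < (cox n d)^[K] j ∧
        (((cox n d)^[K] j) % (n : ℤ) = 0 ∨ (d : ℤ) < ((cox n d)^[K] j) % (n : ℤ)) := by
  intro K
  induction K with
  | zero => omega
  | succ K ih =>
    intro _ j h
    rcases Nat.eq_zero_or_pos K with hK | hK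
    · subst hK
      simpa using step_gt n d hn hd1 hd2 j h
    · obtain ⟨h1, h2⟩ := step_gt n d hn hd1 hd2 j h
      obtain ⟨g1, g2⟩ := ih hK (cox n d j) h2
      rw [Function.iterate_succ_apply]
      exact ⟨by omega, g2⟩

end AffineA

open AffineA

theorem cox_pow_no_fixed_points (n d : ℕ) (hn : 3 ≤ n) (hd1 : 1 ≤ d) (hd2 : d ≤ n - 1) :
    ∀ K : ℕ, 1 ≤ K → ∀ j : ℤ,
      ((1 ≤ j % (n : ℤ) ∧ j % (n : ℤ) ≤ (d : ℤ)) → (cox n d)^[K] j < j) ∧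
      ((j % (n : ℤ) = 0 ∨ (d : ℤ) < j % (n : ℤ)) → j < (cox n d)^[K] j) ∧
      (cox n d)^[K] j ≠ j := by
  intro K hK j
  refine ⟨fun h => (iter_lt n d hn hd1 hd2 K hK j h).1,
    fun h => (iter_gt n d hn hd1 hd2 K hK j h).1, ?_⟩
  have hge : 0 ≤ j % (n : ℤ) := Int.emod_nonneg j (by positivity)
  by_cases h : 1 ≤ j % (n : ℤ) ∧ j % (n : ℤ) ≤ (d : ℤ)
  · have := (iter_lt n d hn hd1 hd2 K hK j h).1; omega
  · have h' : j % (n : ℤ) = 0 ∨ (d : ℤ) < j % (n : ℤ) := by omega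
    have := (iter_gt n d hn hd1 hd2 K hK j h').1; omega
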